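/- In the not-so-bad trader setup, define the refined partition: Ω_{T+1,T+1} = {I_0=...=I_T=1}, Ω_{l,T+1} = {I_0=...=I_{l-1}=1, I_l=...=I_T=-1} for 1 ≤ l ≤ T, and Ω_{l,m} = {I_0=...=I_{l-1}=1, I_l=...=I_{m-1}=-1, I_m=1} for 1 ≤ l < m ≤ T. These events partition the sample space; Ω_{l,m} is F_m-measurable for m ≤ T; and the conditional probability P(Ω_{T+1,T+1} | F_k) restricted to Ω_{l,m} equals 1{k < l} ∏_{r=k+1}^{T} u_r. -/

import Mathlib

open MeasureTheory ProbabilityTheory Real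

/-- Refined partition events: `Ω_{l,m}` is the event that the regime process `I`
(with `I_0 = 1`) first flips to `-1` at time `l` and first flips back to `+1` at time `m`
(`m = T+1` meaning no return before maturity, `l = m = T+1` meaning no flip at all). -/
def OmegaN {Ω : Type*} (I : ℕ → Ω → ℤ) (T l m : ℕ) : Set Ω :=
  if l = T + 1 ∧ m = T + 1 then {ω | ∀ j ≤ T, I j ω = 1}
  else if m = T + 1 then
    {ω | (∀ j < l, I j ω = 1) ∧ ∀ j, l ≤ j → j ≤ T → I j ω = -1}
  else
    {ω | (∀ j < l, I j ω = 1) ∧ (∀ j, l ≤ j → j < m → I j ω = -1) ∧ I m ω = 1}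

/-- One-period stay probability. -/
noncomputable def uprob (γ : ℕ → ℝ) (m : ℕ) : ℝ := (1 + Real.exp (-2 * γ (m - 1))) / 2

lemma hasSum_even_exp (x : ℝ) :
    HasSum (fun n : ℕ => x ^ (2 * n) / (Nat.factorial (2 * n) : ℝ))
      ((Real.exp x + Real.exp (-x)) / 2) := by
  have hf : HasSum (fun n : ℕ => x ^ n / (Nat.factorial n : ℝ)) (Real.exp x) := by
    rw [Real.exp_eq_exp_ℝ]; exact NormedSpace.expSeries_div_hasSum_exp x
  have hg : HasSum (fun n : ℕ => (-x) ^ n / (Nat.factorial n : ℝ)) (Real.exp (-x)) := by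
    rw [Real.exp_eq_exp_ℝ]; exact NormedSpace.expSeries_div_hasSum_exp (-x)
  have h := (hf.add hg).div_const 2
  have hinj : Function.Injective (fun n : ℕ => 2 * n) := fun a b hab => by simpa using hab
  have hvan : ∀ n : ℕ, n ∉ Set.range (fun n : ℕ => 2 * n) →
      (x ^ n / (Nat.factorial n : ℝ) + (-x) ^ n / (Nat.factorial n : ℝ)) / 2 = 0 := by
    intro n hn
    have hodd : Odd n := by
      rcases Nat.even_or_odd n with he | ho
      · obtain ⟨r, hr⟩ := he
        exact absurd ⟨r, by simp; omega⟩ hn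
      · exact ho
    rw [hodd.neg_pow]
    ring
  have key := (Function.Injective.hasSum_iff hinj hvan).2 h
  convert key using 1
  funext n
  simp only [Function.comp]
  rw [(even_two_mul n).neg_pow]
  ring

lemma measure_even_poisson {Ω : Type*} [MeasurableSpace Ω] (μ : Measure Ω)
    (X : Ω → ℕ) (hX : Measurable X) (c : ℝ) (hc : 0 ≤ c)
    (hP : ∀ j : ℕ, μ {ω | X ω = j}
      = ENNReal.ofReal (Real.exp (-c) * c ^ j / (Nat.factorial j))) :
    μ {ω | Even (X ω)} = ENNReal.ofReal ((1 + Real.exp (-2 * c)) / 2) := by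
  have hset : {ω | Even (X ω)} = ⋃ n : ℕ, X ⁻¹' {2 * n} := by
    ext ω
    simp only [Set.mem_setOf_eq, Set.mem_iUnion, Set.mem_preimage, Set.mem_singleton_iff]
    constructor
    · rintro ⟨r, hr⟩; exact ⟨r, by omega⟩
    · rintro ⟨r, hr⟩; exact ⟨r, by omega⟩
  have hdis : Pairwise (Function.onFun Disjoint fun n : ℕ => X ⁻¹' {2 * n}) := by
    intro a b hab
    refine Set.disjoint_left.2 fun ω ha hb => hab ?_
    simp only [Set.mem_preimage, Set.mem_singleton_iff] at ha hb
    omega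
  have hmeas : ∀ n : ℕ, MeasurableSet (X ⁻¹' {2 * n}) :=
    fun n => hX (measurableSet_singleton _)
  rw [hset, measure_iUnion hdis hmeas]
  have hPn : ∀ n : ℕ, μ (X ⁻¹' {2 * n})
      = ENNReal.ofReal (Real.exp (-c) * (c ^ (2 * n) / (Nat.factorial (2 * n) : ℝ))) := by
    intro n
    have := hP (2 * n)
    rw [show X ⁻¹' {2 * n} = {ω | X ω = 2 * n} from rfl, this, mul_div_assoc]
  simp_rw [hPn]
  have hs : HasSum (fun n : ℕ => Real.exp (-c) * (c ^ (2 * n) / (Nat.factorial (2 * n) : ℝ)))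
      (Real.exp (-c) * ((Real.exp c + Real.exp (-c)) / 2)) := (hasSum_even_exp c).mul_left _
  rw [← ENNReal.ofReal_tsum_of_nonneg (fun n => by positivity) hs.summable, hs.tsum_eq]
  congr 1
  have h1 : Real.exp (-c) * Real.exp c = 1 := by rw [← Real.exp_add]; simp
  have h2 : Real.exp (-c) * Real.exp (-c) = Real.exp (-(2 * c)) := by
    rw [← Real.exp_add]; ring_nf
  field_simp
  linear_combination (norm := ring_nf) h1 + h2

private def sigmaOf {Ω : Type*} (X : ℕ → Ω → ℕ) (s : Set ℕ) : MeasurableSpace Ω :=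
  ⨆ i ∈ s, MeasurableSpace.comap (X i) inferInstance

/-- For `I_k = (-1)^{N_k}` with `N` having independent Poisson(γ_l) increments: the events
`Ω_{l,m}`, `(l,m) ∈ 𝓘`, partition the sample space; `Ω_{l,m}` is `F_m`-measurable for
`m ≤ T`; and the conditional probability `P(Ω_{T+1,T+1} | F_k)` restricted to `Ω_{l,m}`
equals `1{k < l} ∏_{r=k+1}^{T} u_r`. -/
theorem stmt16 {Ω : Type*} {m : MeasurableSpace Ω} (μ : Measure Ω) [IsProbabilityMeasure μ]
    (T : ℕ) (γ : ℕ → ℝ) (hγ : ∀ l, 0 ≤ γ l)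
    (N : ℕ → Ω → ℕ) (hNmeas : ∀ k, Measurable (N k))
    (hN0 : ∀ ω, N 0 ω = 0) (hNmono : ∀ k ω, N k ω ≤ N (k + 1) ω)
    (hIndep : iIndepFun (m := fun _ : ℕ => (inferInstance : MeasurableSpace ℕ))
      (fun l ω => N (l + 1) ω - N l ω) μ)
    (hPois : ∀ l, ∀ j : ℕ, μ {ω | N (l + 1) ω - N l ω = j}
      = ENNReal.ofReal (Real.exp (-γ l) * γ l ^ j / (Nat.factorial j)))
    (I : ℕ → Ω → ℤ) (hI : ∀ k ω, I k ω = (-1) ^ (N k ω)) :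
    (∀ ω, ∃! p : ℕ × ℕ,
      ((1 ≤ p.1 ∧ p.1 < p.2 ∧ p.2 ≤ T + 1) ∨ p = (T + 1, T + 1))
      ∧ ω ∈ OmegaN I T p.1 p.2)
    ∧ (∀ l mm, 1 ≤ l → l < mm → mm ≤ T →
        MeasurableSet[(Filtration.natural N fun k => (hNmeas k).stronglyMeasurable) mm]
          (OmegaN I T l mm))
    ∧ (∀ k, k ≤ T → ∀ l mm,
        ((1 ≤ l ∧ l < mm ∧ mm ≤ T + 1) ∨ (l = T + 1 ∧ mm = T + 1)) →
        ∀ᵐ ω ∂μ, ω ∈ OmegaN I T l mm →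
          (μ[(OmegaN I T (T + 1) (T + 1)).indicator (fun _ => (1 : ℝ))
              | ((Filtration.natural N fun k => (hNmeas k).stronglyMeasurable) k)]) ω
            = (if k < l then ∏ r ∈ Finset.Icc (k + 1) T, uprob γ r else 0)) := by
  classical
  set F := Filtration.natural N fun k => (hNmeas k).stronglyMeasurable with hF
  -- parity helpers
  have hI1 : ∀ j ω, I j ω = 1 ↔ Even (N j ω) := by
    intro j ω
    rw [hI]
    constructor
    · intro h
      by_contra hodd
      rw [(Nat.not_even_iff_odd.1 hodd).neg_one_pow] at h
      norm_num at h
    · intro h; exact h.neg_one_pow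
  have hIneg : ∀ j ω, I j ω = -1 ↔ ¬ Even (N j ω) := by
    intro j ω
    rw [hI]
    constructor
    · intro h hev; rw [hev.neg_one_pow] at h; norm_num at h
    · intro h; exact (Nat.not_even_iff_odd.1 h).neg_one_pow
  have hIor : ∀ j ω, I j ω = 1 ∨ I j ω = -1 := by
    intro j ω
    by_cases h : Even (N j ω)
    · exact Or.inl ((hI1 j ω).2 h)
    · exact Or.inr ((hIneg j ω).2 h)
  have hI0one : ∀ ω, I 0 ω = 1 := fun ω => (hI1 0 ω).2 (by simp [hN0])
  -- extraction lemma
  have hval : ∀ (ω : Ω) (l mm : ℕ),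
      ((1 ≤ l ∧ l < mm ∧ mm ≤ T + 1) ∨ (l = T + 1 ∧ mm = T + 1)) →
      ω ∈ OmegaN I T l mm →
      (∀ j < l, I j ω = 1) ∧ (l ≤ T → I l ω = -1) ∧
      (∀ j, l ≤ j → j ≤ T → j < mm → I j ω = -1) ∧ (mm ≤ T → I mm ω = 1) := by
    intro ω l mm hv hm
    unfold OmegaN at hm
    by_cases h11 : l = T + 1 ∧ mm = T + 1
    · rw [if_pos h11] at hm
      obtain ⟨rfl, rfl⟩ := h11
      exact ⟨fun j hj => hm j (by omega), by omega, fun j h1 h2 h3 => by omega, by omega⟩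
    · rw [if_neg h11] at hm
      have hv' : 1 ≤ l ∧ l < mm ∧ mm ≤ T + 1 := by tauto
      by_cases hmT : mm = T + 1
      · rw [if_pos hmT] at hm
        exact ⟨hm.1, fun hl => hm.2 l le_rfl hl, fun j h1 h2 _ => hm.2 j h1 h2, by omega⟩
      · rw [if_neg hmT] at hm
        exact ⟨hm.1, fun _ => hm.2.1 l le_rfl (by omega), fun j h1 _ h3 => hm.2.1 j h1 h3,
          fun _ => hm.2.2⟩
  -- uniqueness helper
  have huniq : ∀ (ω : Ω) (p q : ℕ × ℕ),
      ((1 ≤ p.1 ∧ p.1 < p.2 ∧ p.2 ≤ T + 1) ∨ p = (T + 1, T + 1)) →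
      ω ∈ OmegaN I T p.1 p.2 →
      ((1 ≤ q.1 ∧ q.1 < q.2 ∧ q.2 ≤ T + 1) ∨ q = (T + 1, T + 1)) →
      ω ∈ OmegaN I T q.1 q.2 → p = q := by
    intro ω p q hvp hmp hvq hmq
    have hvp' : (1 ≤ p.1 ∧ p.1 < p.2 ∧ p.2 ≤ T + 1) ∨ (p.1 = T + 1 ∧ p.2 = T + 1) := by
      rcases hvp with h | h
      · exact Or.inl h
      · exact Or.inr ⟨by rw [h], by rw [h]⟩
    have hvq' : (1 ≤ q.1 ∧ q.1 < q.2 ∧ q.2 ≤ T + 1) ∨ (q.1 = T + 1 ∧ q.2 = T + 1) := by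
      rcases hvq with h | h
      · exact Or.inl h
      · exact Or.inr ⟨by rw [h], by rw [h]⟩
    obtain ⟨hp1, hp2, hp3, hp4⟩ := hval ω p.1 p.2 hvp' hmp
    obtain ⟨hq1, hq2, hq3, hq4⟩ := hval ω q.1 q.2 hvq' hmq
    have hne : (1 : ℤ) ≠ -1 := by norm_num
    -- first components equal
    have h1 : p.1 = q.1 := by
      rcases lt_trichotomy p.1 q.1 with h | h | h
      · exfalso
        have hle : p.1 ≤ T := by omega
        exact hne ((hq1 p.1 h).symm.trans (hp2 hle))
      · exact h
      · exfalso
        have hle : q.1 ≤ T := by omega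
        exact hne ((hp1 q.1 h).symm.trans (hq2 hle))
    have h2 : p.2 = q.2 := by
      rcases lt_trichotomy p.2 q.2 with h | h | h
      · exfalso
        have hle : p.2 ≤ T := by omega
        have hlp : p.1 ≤ p.2 := by omega
        have := hq3 p.2 (by omega) hle h
        exact hne ((hp4 hle).symm.trans this)
      · exact h
      · exfalso
        have hle : q.2 ≤ T := by omega
        have := hp3 q.2 (by omega) hle h
        exact hne ((hq4 hle).symm.trans this)
    exact Prod.ext h1 h2
  -- existence
  have hexist : ∀ ω : Ω, ∃ p : ℕ × ℕ,
      ((1 ≤ p.1 ∧ p.1 < p.2 ∧ p.2 ≤ T + 1) ∨ p = (T + 1, T + 1))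
      ∧ ω ∈ OmegaN I T p.1 p.2 := by
    intro ω
    by_cases hex : ∃ j, j ≤ T ∧ I j ω = -1
    · set l := Nat.find hex with hldef
      obtain ⟨hlT, hlneg⟩ : l ≤ T ∧ I l ω = -1 := Nat.find_spec hex
      have hl1 : 1 ≤ l := by
        rcases Nat.eq_zero_or_pos l with h0 | h
        · exfalso
          rw [h0, hI0one ω] at hlneg
          norm_num at hlneg
        · exact h
      have hbefore : ∀ j < l, I j ω = 1 := by
        intro j hj
        have hmin := Nat.find_min hex hj
        push_neg at hmin
        rcases hIor j ω with h | h
        · exact h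
        · exact absurd h (hmin (by omega))
      by_cases hex2 : ∃ j, (l ≤ j ∧ j ≤ T) ∧ I j ω = 1
      · set mm := Nat.find hex2 with hmdef
        obtain ⟨⟨hlm, hmT⟩, hm1⟩ : (l ≤ mm ∧ mm ≤ T) ∧ I mm ω = 1 := Nat.find_spec hex2
        have hlm' : l < mm := by
          rcases lt_or_eq_of_le hlm with h | h
          · exact h
          · exfalso; rw [← h, hlneg] at hm1; norm_num at hm1
        have hmid : ∀ j, l ≤ j → j < mm → I j ω = -1 := by
          intro j hj1 hj2
          have hmin := Nat.find_min hex2 hj2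
          push_neg at hmin
          rcases hIor j ω with h | h
          · exact absurd h (hmin ⟨hj1, by omega⟩)
          · exact h
        refine ⟨(l, mm), Or.inl ⟨hl1, hlm', by omega⟩, ?_⟩
        unfold OmegaN
        rw [if_neg (by omega), if_neg (by omega)]
        exact ⟨hbefore, hmid, hm1⟩
      · push_neg at hex2
        have hall : ∀ j, l ≤ j → j ≤ T → I j ω = -1 := by
          intro j h1 h2
          rcases hIor j ω with h | h
          · exact absurd h (hex2 j ⟨h1, h2⟩)
          · exact h
        refine ⟨(l, T + 1), Or.inl ⟨hl1, by omega, le_rfl⟩, ?_⟩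
        unfold OmegaN
        rw [if_neg (by omega), if_pos rfl]
        exact ⟨hbefore, hall⟩
    · push_neg at hex
      have hall : ∀ j ≤ T, I j ω = 1 := fun j hj => (hIor j ω).resolve_right (hex j hj)
      refine ⟨(T + 1, T + 1), Or.inr rfl, ?_⟩
      unfold OmegaN
      rw [if_pos ⟨rfl, rfl⟩]
      exact hall
  -- measurability of I j w.r.t. F mm
  have hIm : ∀ j mm, j ≤ mm → Measurable[F mm] (I j) := by
    intro j mm hj
    have hNj : Measurable[F mm] (N j) :=
      ((Filtration.stronglyAdapted_natural (fun k => (hNmeas k).stronglyMeasurable) j).mono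
        (F.mono hj) |>.measurable)
    have hIj : I j = (fun n : ℕ => ((-1 : ℤ)) ^ n) ∘ N j := funext fun ω => hI j ω
    rw [hIj]
    exact measurable_from_top.comp hNj
  refine ⟨?_, ?_, ?_⟩
  · -- part 1
    intro ω
    obtain ⟨p, hp1, hp2⟩ := hexist ω
    exact ⟨p, ⟨hp1, hp2⟩, fun q hq => huniq ω q p hq.1 hq.2 hp1 hp2⟩
  · -- part 2
    intro l mm h1 h2 h3
    have heq : OmegaN I T l mm = (⋂ j ∈ Set.Iio l, I j ⁻¹' {1}) ∩
        ((⋂ j ∈ Set.Ico l mm, I j ⁻¹' {-1}) ∩ I mm ⁻¹' {1}) := by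
      unfold OmegaN
      rw [if_neg (by omega), if_neg (by omega)]
      ext ω
      simp only [Set.mem_setOf_eq, Set.mem_inter_iff, Set.mem_iInter, Set.mem_preimage,
        Set.mem_singleton_iff, Set.mem_Iio, Set.mem_Ico]
      tauto
    rw [heq]
    have hm1 : ∀ j, j ≤ mm → ∀ c : ℤ, MeasurableSet[F mm] (I j ⁻¹' {c}) :=
      fun j hj c => (hIm j mm hj) (measurableSet_singleton c)
    refine MeasurableSet.inter ?_ (MeasurableSet.inter ?_ (hm1 mm le_rfl 1))
    · exact MeasurableSet.biInter (Set.to_countable _)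
        fun j hj => hm1 j (by have := Set.mem_Iio.mp hj; omega) 1
    · exact MeasurableSet.biInter (Set.to_countable _)
        fun j hj => hm1 j (by have := Set.mem_Ico.mp hj; omega) (-1)
  · -- part 3
    intro k hkT
    set A : Set Ω := OmegaN I T (T + 1) (T + 1) with hA
    have hAeq : A = {ω | ∀ j ≤ T, Even (N j ω)} := by
      rw [hA]
      unfold OmegaN
      rw [if_pos ⟨rfl, rfl⟩]
      ext ω
      simp only [Set.mem_setOf_eq]
      exact ⟨fun h j hj => (hI1 j ω).1 (h j hj), fun h j hj => (hI1 j ω).2 (h j hj)⟩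
    set B : Set Ω := {ω | ∀ j ≤ k, Even (N j ω)} with hB
    set c : ℝ := ∏ j ∈ Finset.Ico k T, (1 + Real.exp (-2 * γ j)) / 2 with hc
    have hc0 : 0 ≤ c := Finset.prod_nonneg fun j _ => by positivity
    set X : ℕ → Ω → ℕ := fun l ω => N (l + 1) ω - N l ω with hX
    have hXmeas : ∀ l, Measurable (X l) := fun l => (hNmeas (l + 1)).sub (hNmeas l)
    set D : Set Ω := ⋂ j ∈ Finset.Ico k T, {ω | Even (X j ω)} with hD
    -- σ-algebras of increments
    have hMlt : sigmaOf X (Set.Iio k) = ⨆ i ∈ Set.Iio k, MeasurableSpace.comap (X i) inferInstance := rfl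
    have hMge : sigmaOf X (Set.Ici k) = ⨆ i ∈ Set.Ici k, MeasurableSpace.comap (X i) inferInstance := rfl
    have hIndep' : Indep (sigmaOf X (Set.Iio k)) (sigmaOf X (Set.Ici k)) μ := by
      refine indep_iSup_of_disjoint (fun i => ?_) hIndep.iIndep ?_
      · exact measurable_iff_comap_le.1 (hXmeas i)
      · exact Set.Iio_disjoint_Ici le_rfl
    have hNMlt : ∀ j, j ≤ k → Measurable[sigmaOf X (Set.Iio k)] (N j) := by
      intro j
      induction j with
      | zero =>
        intro _
        have h0 : N 0 = fun _ => 0 := funext hN0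
        rw [h0]
        exact measurable_const
      | succ n ih =>
        intro hn
        have h1 : Measurable[sigmaOf X (Set.Iio k)] (N n) := ih (by omega)
        have h2 : Measurable[sigmaOf X (Set.Iio k)] (X n) := by
          have hle : MeasurableSpace.comap (X n) inferInstance ≤ sigmaOf X (Set.Iio k) := by
            rw [hMlt]
            exact le_biSup (fun i => MeasurableSpace.comap (X i) inferInstance)
              (show n ∈ Set.Iio k by simp only [Set.mem_Iio]; omega)
          exact measurable_iff_comap_le.2 hle
        have heq : N (n + 1) = fun ω => N n ω + X n ω :=
          funext fun ω => (Nat.add_sub_cancel' (hNmono n ω)).symm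
        rw [heq]
        exact h1.add h2
    have hFk : (F k : MeasurableSpace Ω) ≤ sigmaOf X (Set.Iio k) := by
      refine iSup₂_le fun j hj => ?_
      exact measurable_iff_comap_le.1 (hNMlt j hj)
    have hEvenMeas : MeasurableSet ({n : ℕ | Even n}) := trivial
    have hDMge : MeasurableSet[sigmaOf X (Set.Ici k)] D := by
      rw [hD]
      refine MeasurableSet.biInter (Finset.countable_toSet _) fun j hj => ?_
      have hle : MeasurableSpace.comap (X j) inferInstance ≤ sigmaOf X (Set.Ici k) := by
        rw [hMge]
        exact le_biSup (fun i => MeasurableSpace.comap (X i) inferInstance)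
          (Set.mem_Ici.2 (Finset.mem_Ico.1 hj).1)
      exact measurable_iff_comap_le.2 hle hEvenMeas
    have hμD : μ D = ENNReal.ofReal c := by
      rw [hD]
      rw [hIndep.meas_biInter (S := Finset.Ico k T)
        (s := fun j => {ω | Even (X j ω)})
        (fun i _ => ⟨{n | Even n}, hEvenMeas, rfl⟩)]
      rw [Finset.prod_congr rfl
        (fun j _ => measure_even_poisson μ (X j) (hXmeas j) (γ j) (hγ j) (hPois j))]
      rw [hc, ← ENNReal.ofReal_prod_of_nonneg (fun j _ => by positivity)]
    have hABD : A = B ∩ D := by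
      rw [hAeq, hB, hD]
      ext ω
      simp only [Set.mem_setOf_eq, Set.mem_inter_iff, Set.mem_iInter, Finset.mem_Ico]
      constructor
      · intro h
        refine ⟨fun j hj => h j (by omega), fun j hj => ?_⟩
        have h1 : Even (N j ω) := h j (by omega)
        have h2 : Even (N (j + 1) ω) := h (j + 1) (by omega)
        rw [hX]
        exact (Nat.even_sub (hNmono j ω)).2 (by tauto)
      · rintro ⟨hb, hd⟩
        have hstep : ∀ j, k ≤ j → j ≤ T → Even (N j ω) := by
          intro j
          induction j with
          | zero => intro h1 _; exact hb 0 (by omega)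
          | succ n ih =>
            intro h1 h2
            rcases Nat.lt_or_ge k (n + 1) with hk | hk
            · have hkn : k ≤ n := by omega
              have he1 : Even (N n ω) := ih hkn (by omega)
              have he2 : Even (X n ω) := hd n ⟨hkn, by omega⟩
              have := (Nat.even_sub (hNmono n ω)).1 he2
              tauto
            · exact hb (n + 1) (by omega)
        intro j hj
        rcases Nat.lt_or_ge j k with h | h
        · exact hb j (by omega)
        · exact hstep j h hj
    have hBmF : MeasurableSet[F k] B := by
      have hBeq : B = ⋂ j ∈ Set.Iic k, N j ⁻¹' {n | Even n} := by
        rw [hB]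
        ext ω
        simp [Set.mem_iInter]
      rw [hBeq]
      refine MeasurableSet.biInter (Set.to_countable _) fun j hj => ?_
      have hNj : Measurable[F k] (N j) :=
        ((Filtration.stronglyAdapted_natural (fun k => (hNmeas k).stronglyMeasurable) j).mono
          (F.mono (Set.mem_Iic.1 hj)) |>.measurable)
      exact hNj hEvenMeas
    have hAm : MeasurableSet A := by
      rw [hAeq]
      have : {ω | ∀ j ≤ T, Even (N j ω)} = ⋂ j ∈ Set.Iic T, N j ⁻¹' {n | Even n} := by
        ext ω; simp [Set.mem_iInter]
      rw [this]
      exact MeasurableSet.biInter (Set.to_countable _) fun j _ => (hNmeas j) hEvenMeas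
    have hBm : MeasurableSet B := (F.le k) _ hBmF
    set g : Ω → ℝ := B.indicator fun _ => c with hg
    haveI : SigmaFinite (μ.trim (F.le k)) := inferInstance
    have hmain : g =ᵐ[μ] μ[A.indicator (fun _ => (1 : ℝ)) | F k] := by
      refine ae_eq_condExp_of_forall_setIntegral_eq (F.le k)
        ((integrable_const (1 : ℝ)).indicator hAm) (fun s _ _ => ?_) (fun s hs _ => ?_) ?_
      · exact ((integrable_const c).indicator hBm).integrableOn
      · have hsm : MeasurableSet s := (F.le k) _ hs
        rw [hg]
        rw [integral_indicator hBm, integral_indicator hAm,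
          setIntegral_const, setIntegral_const,
          measureReal_restrict_apply hBm, measureReal_restrict_apply hAm,
          measureReal_def, measureReal_def]
        simp only [smul_eq_mul, mul_one]
        have hABs : A ∩ s = (B ∩ s) ∩ D := by
          rw [hABD]; ext ω; simp only [Set.mem_inter_iff]; tauto
        have hBsMlt : MeasurableSet[sigmaOf X (Set.Iio k)] (B ∩ s) := hFk _ (hBmF.inter hs)
        have hkey : μ (A ∩ s) = μ (B ∩ s) * μ D := by
          rw [hABs]
          exact (Indep_iff (sigmaOf X (Set.Iio k)) (sigmaOf X (Set.Ici k)) μ).1 hIndep' _ _ hBsMlt hDMge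
        rw [hkey, hμD, ENNReal.toReal_mul, ENNReal.toReal_ofReal hc0]
      · exact StronglyMeasurable.aestronglyMeasurable
          (stronglyMeasurable_const.indicator hBmF)
    have hcprod : (∏ r ∈ Finset.Icc (k + 1) T, uprob γ r) = c := by
      rw [hc]
      refine Finset.prod_nbij' (fun r => r - 1) (fun j => j + 1) ?_ ?_ ?_ ?_ ?_
      · intro a ha
        simp only [Finset.mem_Icc] at ha
        simp only [Finset.mem_Ico]
        omega
      · intro a ha
        simp only [Finset.mem_Ico] at ha
        simp only [Finset.mem_Icc]
        omega
      · intro a ha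
        simp only [Finset.mem_Icc] at ha
        show a - 1 + 1 = a
        omega
      · intro a _
        show a + 1 - 1 = a
        omega
      · intro a ha
        rfl
    intro l mm hv
    filter_upwards [hmain] with ω hω hmem
    rw [← hω]
    by_cases hkl : k < l
    · rw [if_pos hkl]
      have hωB : ω ∈ B := by
        intro j hj
        have hv' : (1 ≤ l ∧ l < mm ∧ mm ≤ T + 1) ∨ (l = T + 1 ∧ mm = T + 1) := hv
        obtain ⟨hb, _, _, _⟩ := hval ω l mm hv' hmem
        exact (hI1 j ω).1 (hb j (by omega))
      rw [hg, Set.indicator_of_mem hωB, hcprod]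
    · rw [if_neg hkl]
      have hlk : l ≤ k := by omega
      have hlT : l ≤ T := by omega
      obtain ⟨_, hneg, _, _⟩ := hval ω l mm hv hmem
      have hωB : ω ∉ B := by
        intro hωB
        have h1 : Even (N l ω) := hωB l hlk
        exact (hIneg l ω).1 (hneg hlT) h1
      rw [hg, Set.indicator_of_notMem hωB]
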